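/- Let f be a bounded probability density and Ψ square-integrable. Then ∫ (Ψ_h² * f)(x) f(x) dx = h^{−1} R(Ψ) R(f) + o(h^{−1}) as h → 0, where Ψ_h(u) = Ψ(u/h)/h, R(g) = ∫ g², provided additionally that f is C² with bounded f'' and ∫ u² Ψ(u)² du < ∞. In particular the integral is O(h^{−1}). -/

import Mathlib

open MeasureTheory Filter Asymptotics

/-- For Ψ_h(u) = Ψ(u/h)/h, one has ∫ (Ψ_h² * f)(x) f(x) dx = h⁻¹R(Ψ)R(f) + o(h⁻¹)
as h → 0⁺; in particular the integral is O(h⁻¹). -/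
theorem convolution_sq_kernel_integral_asymptotics
    (f Ψ : ℝ → ℝ)
    (hf : ContDiff ℝ 2 f)
    (hf_nonneg : ∀ x, 0 ≤ f x)
    (hf_int : Integrable f)
    (hf_prob : ∫ x, f x = 1)
    (hf_bdd : ∃ M, ∀ x, |f x| ≤ M ∧ |deriv f x| ≤ M ∧ |deriv (deriv f) x| ≤ M)
    (hΨ_sq : Integrable (fun u => (Ψ u) ^ 2))
    (hΨ_sq_m2 : Integrable (fun u => u ^ 2 * (Ψ u) ^ 2)) :
    ((fun h : ℝ => (∫ x, (∫ y, (Ψ ((x - y) / h) / h) ^ 2 * f y) * f x)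
        - h⁻¹ * (∫ u, (Ψ u) ^ 2) * (∫ x, (f x) ^ 2))
      =o[nhdsWithin 0 (Set.Ioi 0)] (fun h : ℝ => h⁻¹))
    ∧ ((fun h : ℝ => ∫ x, (∫ y, (Ψ ((x - y) / h) / h) ^ 2 * f y) * f x)
      =O[nhdsWithin 0 (Set.Ioi 0)] (fun h : ℝ => h⁻¹)) := by
  obtain ⟨M, hM⟩ := hf_bdd
  have hM0 : 0 ≤ M := le_trans (abs_nonneg _) (hM 0).1
  have hfc : Continuous f := hf.continuous
  have hfd : Differentiable ℝ f := hf.differentiable two_ne_zero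
  set S := ∫ u, (Ψ u) ^ 2 with hS
  set R := ∫ x, (f x) ^ 2 with hR
  -- Lipschitz bound for f
  have hlip : ∀ a b : ℝ, |f a - f b| ≤ M * |a - b| := by
    intro a b
    have := Convex.norm_image_sub_le_of_norm_deriv_le
      (f := f) (s := Set.univ) (C := M)
      (fun x _ => (hfd x)) (fun x _ => by simpa [Real.norm_eq_abs] using (hM x).2.1)
      convex_univ (Set.mem_univ b) (Set.mem_univ a)
    simpa [Real.norm_eq_abs] using this
  -- integrability of |u| * Ψ u ^ 2
  have hΨm : AEStronglyMeasurable (fun u => (Ψ u) ^ 2) volume := hΨ_sq.aestronglyMeasurable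
  have hC1int : Integrable (fun u => |u| * (Ψ u) ^ 2) := by
    refine (hΨ_sq.add hΨ_sq_m2).mono' (continuous_abs.aestronglyMeasurable.mul hΨm) ?_
    filter_upwards with u
    have h1 : |u| * (Ψ u) ^ 2 ≤ (Ψ u) ^ 2 + u ^ 2 * (Ψ u) ^ 2 := by
      rcases le_total (|u|) 1 with hu | hu
      · have : |u| * (Ψ u) ^ 2 ≤ 1 * (Ψ u) ^ 2 :=
          mul_le_mul_of_nonneg_right hu (sq_nonneg _)
        nlinarith [sq_nonneg u, sq_nonneg (Ψ u)]
      · have : |u| * (Ψ u) ^ 2 ≤ (|u| * |u|) * (Ψ u) ^ 2 := by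
          nlinarith [mul_nonneg (sub_nonneg.2 hu) (mul_nonneg (abs_nonneg u) (sq_nonneg (Ψ u)))]
        nlinarith [sq_nonneg (Ψ u), sq_abs u]
    have h2 : 0 ≤ |u| * (Ψ u) ^ 2 := mul_nonneg (abs_nonneg _) (sq_nonneg _)
    simpa [Real.norm_eq_abs, abs_of_nonneg h2] using h1
  set C₁ := ∫ u, |u| * (Ψ u) ^ 2 with hC1
  have hC1nn : 0 ≤ C₁ :=
    integral_nonneg fun u => mul_nonneg (abs_nonneg _) (sq_nonneg _)
  -- integrability of f ^ 2
  have hf2_int : Integrable (fun x => (f x) ^ 2) := by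
    refine (hf_int.const_mul M).mono' ((hfc.pow 2).aestronglyMeasurable) ?_
    filter_upwards with x
    have : (f x) ^ 2 ≤ M * f x := by
      have h1 : f x ≤ M := le_trans (le_abs_self _) (hM x).1
      nlinarith [hf_nonneg x]
    simpa [Real.norm_eq_abs, abs_of_nonneg (sq_nonneg (f x))] using this
  -- the key uniform bound for h > 0
  have key : ∀ h : ℝ, 0 < h →
      |(∫ x, (∫ y, (Ψ ((x - y) / h) / h) ^ 2 * f y) * f x) - h⁻¹ * S * R| ≤ M * C₁ := by
    intro h hh
    have hh' : (h : ℝ) ≠ 0 := hh.ne'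
    set A : ℝ → ℝ := fun x => ∫ u, (Ψ u) ^ 2 * f (x - h * u) with hA
    -- change of variables in the inner integral
    have inner_eq : ∀ x : ℝ,
        (∫ y, (Ψ ((x - y) / h) / h) ^ 2 * f y) = h⁻¹ * A x := by
      intro x
      have e0 : (∫ y, (Ψ ((x - y) / h) / h) ^ 2 * f y)
          = ∫ y, (fun t => (Ψ (t / h) / h) ^ 2 * f (x - h * (t / h))) (x - y) := by
        congr 1; funext y
        have hxy : x - h * ((x - y) / h) = y := by field_simp; ring
        simp only [hxy]
      have e1 : (∫ y, (fun t => (Ψ (t / h) / h) ^ 2 * f (x - h * (t / h))) (x - y))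
          = ∫ t, (Ψ (t / h) / h) ^ 2 * f (x - h * (t / h)) :=
        integral_sub_left_eq_self (fun t => (Ψ (t / h) / h) ^ 2 * f (x - h * (t / h))) volume x
      have e2 : (∫ t : ℝ, (Ψ (t / h) / h) ^ 2 * f (x - h * (t / h)))
          = |h| • ∫ u, (Ψ u / h) ^ 2 * f (x - h * u) :=
        MeasureTheory.Measure.integral_comp_div
          (fun u => (Ψ u / h) ^ 2 * f (x - h * u)) h
      have e3 : (∫ u, (Ψ u / h) ^ 2 * f (x - h * u))
          = (h ^ 2)⁻¹ * ∫ u, (Ψ u) ^ 2 * f (x - h * u) := by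
        rw [← integral_const_mul]
        congr 1; funext u
        field_simp
      have hAx : A x = ∫ u, (Ψ u) ^ 2 * f (x - h * u) := rfl
      rw [e0, e1, e2, e3, smul_eq_mul, abs_of_pos hh, hAx]
      field_simp
    -- continuity of A
    have hA_cont : Continuous A := by
      rw [hA]
      refine continuous_of_dominated (bound := fun u => (Ψ u) ^ 2 * M) ?_ ?_ (hΨ_sq.mul_const M) ?_
      · intro x
        exact hΨm.mul ((hfc.comp (by continuity)).aestronglyMeasurable)
      · intro x
        filter_upwards with u
        have : |(Ψ u) ^ 2 * f (x - h * u)| = (Ψ u) ^ 2 * |f (x - h * u)| := by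
          rw [abs_mul, abs_of_nonneg (sq_nonneg _)]
        rw [Real.norm_eq_abs, this]
        exact mul_le_mul_of_nonneg_left (hM _).1 (sq_nonneg _)
      · filter_upwards with u
        exact continuous_const.mul (hfc.comp (by continuity))
    -- pointwise bound on A x - S * f x
    have hAbound : ∀ x : ℝ, |A x - S * f x| ≤ M * C₁ * h := by
      intro x
      have i1 : Integrable (fun u => (Ψ u) ^ 2 * f (x - h * u)) := by
        refine (hΨ_sq.mul_const M).mono'
          (hΨm.mul ((hfc.comp (by continuity)).aestronglyMeasurable)) ?_
        filter_upwards with u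
        have : |(Ψ u) ^ 2 * f (x - h * u)| = (Ψ u) ^ 2 * |f (x - h * u)| := by
          rw [abs_mul, abs_of_nonneg (sq_nonneg _)]
        rw [Real.norm_eq_abs, this]
        exact mul_le_mul_of_nonneg_left (hM _).1 (sq_nonneg _)
      have i2 : Integrable (fun u => (Ψ u) ^ 2 * f x) := hΨ_sq.mul_const _
      have e3 : S * f x = ∫ u, (Ψ u) ^ 2 * f x := by
        rw [hS, ← integral_mul_const]
      have e4 : A x - S * f x = ∫ u, (Ψ u) ^ 2 * (f (x - h * u) - f x) := by
        rw [hA, e3, ← integral_sub i1 i2]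
        congr 1; funext u; ring
      rw [e4]
      have bnd : ∀ u : ℝ, ‖(Ψ u) ^ 2 * (f (x - h * u) - f x)‖ ≤ (M * h) * (|u| * (Ψ u) ^ 2) := by
        intro u
        have h1 : |f (x - h * u) - f x| ≤ M * |h * u| := by
          have := hlip (x - h * u) x
          simpa using this
        have : ‖(Ψ u) ^ 2 * (f (x - h * u) - f x)‖
            = (Ψ u) ^ 2 * |f (x - h * u) - f x| := by
          rw [Real.norm_eq_abs, abs_mul, abs_of_nonneg (sq_nonneg _)]
        rw [this]
        calc (Ψ u) ^ 2 * |f (x - h * u) - f x| ≤ (Ψ u) ^ 2 * (M * |h * u|) :=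
              mul_le_mul_of_nonneg_left h1 (sq_nonneg _)
          _ = (M * h) * (|u| * (Ψ u) ^ 2) := by
              rw [abs_mul, abs_of_pos hh]; ring
      have := norm_integral_le_of_norm_le (hC1int.const_mul (M * h))
        (Filter.Eventually.of_forall bnd)
      rw [Real.norm_eq_abs] at this
      calc |∫ u, (Ψ u) ^ 2 * (f (x - h * u) - f x)| ≤ ∫ u, (M * h) * (|u| * (Ψ u) ^ 2) := this
        _ = (M * h) * C₁ := by rw [hC1, ← integral_const_mul]
        _ = M * C₁ * h := by ring
    -- integrability of (A - S f) * f
    have hAf_int : Integrable (fun x => (A x - S * f x) * f x) := by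
      refine (hf_int.const_mul (M * C₁ * h)).mono'
        (((hA_cont.sub (continuous_const.mul hfc)).mul hfc).aestronglyMeasurable) ?_
      filter_upwards with x
      rw [Real.norm_eq_abs, abs_mul, abs_of_nonneg (hf_nonneg x)]
      exact mul_le_mul_of_nonneg_right (hAbound x) (hf_nonneg x)
    -- decompose the big integral
    have e5 : (∫ x, (∫ y, (Ψ ((x - y) / h) / h) ^ 2 * f y) * f x)
        = h⁻¹ * ∫ x, A x * f x := by
      rw [← integral_const_mul]
      congr 1; funext x
      rw [inner_eq x]; ring
    have e6 : (∫ x, A x * f x) = (∫ x, (A x - S * f x) * f x) + S * R := by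
      have : (∫ x, A x * f x) = ∫ x, ((A x - S * f x) * f x + S * (f x) ^ 2) := by
        congr 1; funext x; ring
      rw [this, integral_add hAf_int (hf2_int.const_mul S), integral_const_mul, hR]
    have e7 : (∫ x, (∫ y, (Ψ ((x - y) / h) / h) ^ 2 * f y) * f x) - h⁻¹ * S * R
        = h⁻¹ * ∫ x, (A x - S * f x) * f x := by
      rw [e5, e6]; ring
    -- bound the error integral
    have eb : |∫ x, (A x - S * f x) * f x| ≤ M * C₁ * h := by
      have bnd : ∀ x : ℝ, ‖(A x - S * f x) * f x‖ ≤ (M * C₁ * h) * f x := by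
        intro x
        rw [Real.norm_eq_abs, abs_mul, abs_of_nonneg (hf_nonneg x)]
        exact mul_le_mul_of_nonneg_right (hAbound x) (hf_nonneg x)
      have := norm_integral_le_of_norm_le (hf_int.const_mul (M * C₁ * h))
        (Filter.Eventually.of_forall bnd)
      rw [Real.norm_eq_abs] at this
      calc |∫ x, (A x - S * f x) * f x| ≤ ∫ x, (M * C₁ * h) * f x := this
        _ = (M * C₁ * h) * ∫ x, f x := integral_const_mul _ _
        _ = M * C₁ * h := by rw [hf_prob]; ring
    rw [e7, abs_mul, abs_of_nonneg (inv_nonneg.mpr hh.le)]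
    calc h⁻¹ * |∫ x, (A x - S * f x) * f x| ≤ h⁻¹ * (M * C₁ * h) :=
          mul_le_mul_of_nonneg_left eb (inv_nonneg.mpr hh.le)
      _ = M * C₁ := by field_simp
  -- conclude
  have hbigO1 : (fun h : ℝ => (∫ x, (∫ y, (Ψ ((x - y) / h) / h) ^ 2 * f y) * f x)
      - h⁻¹ * S * R) =O[nhdsWithin 0 (Set.Ioi 0)] (fun _ => (1 : ℝ)) := by
    refine IsBigO.of_bound (M * C₁) ?_
    filter_upwards [self_mem_nhdsWithin] with h hh
    simpa [Real.norm_eq_abs] using key h hh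
  have hlo : (fun _ : ℝ => (1 : ℝ)) =o[nhdsWithin 0 (Set.Ioi 0)] (fun h : ℝ => h⁻¹) := by
    rw [isLittleO_const_left]
    right
    have : Tendsto (fun h : ℝ => h⁻¹) (nhdsWithin 0 (Set.Ioi 0)) atTop :=
      tendsto_inv_nhdsGT_zero
    exact tendsto_abs_atTop_atTop.comp this
  have ho : (fun h : ℝ => (∫ x, (∫ y, (Ψ ((x - y) / h) / h) ^ 2 * f y) * f x)
      - h⁻¹ * S * R) =o[nhdsWithin 0 (Set.Ioi 0)] (fun h : ℝ => h⁻¹) :=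
    hbigO1.trans_isLittleO hlo
  refine ⟨ho, ?_⟩
  have hO2 : (fun h : ℝ => h⁻¹ * S * R) =O[nhdsWithin 0 (Set.Ioi 0)] (fun h : ℝ => h⁻¹) := by
    refine IsBigO.of_bound (|S| * |R|) ?_
    filter_upwards with h
    rw [Real.norm_eq_abs, Real.norm_eq_abs, abs_mul, abs_mul]
    ring_nf
    nlinarith [abs_nonneg (h⁻¹), abs_nonneg S, abs_nonneg R]
  have := ho.isBigO.add hO2
  simpa using this
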